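/- Let f : H → ℝ be convex, (ε_k)_{k≥1} a positive nonincreasing sequence converging to 0, and for each k let x̄_k be the unique minimizer over H of x ↦ f(x) + (ε_k/2)‖x‖². Then for all k ≥ 1: (a) if ε_{k+1} < ε_k, then ‖x̄_{k+1}‖² − ‖x̄_k‖² ≥ ((ε_k + ε_{k+1})/(ε_k − ε_{k+1})) ‖x̄_{k+1} − x̄_k‖² and ‖x̄_k‖² + (ε_{k+1}/(ε_k − ε_{k+1})) ‖x̄_{k+1} − x̄_k‖² ≤ ⟨x̄_{k+1}, x̄_k⟩ ≤ ‖x̄_{k+1}‖² − (ε_k/(ε_k − ε_{k+1})) ‖x̄_{k+1} − x̄_k‖²; (b) ‖x̄_{k+1} − x̄_k‖ ≤ min( ((ε_k − ε_{k+1})/ε_{k+1}) ‖x̄_k‖, ((ε_k − ε_{k+1})/ε_k) ‖x̄_{k+1}‖ ). -/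

import Mathlib

open Filter Asymptotics Topology
open scoped RealInnerProductSpace

lemma strong_min_aux {E : Type*} [NormedAddCommGroup E] [InnerProductSpace ℝ E]
    (f : E → ℝ) (hconv : ConvexOn ℝ Set.univ f) (ε : ℝ) (hε : 0 < ε) (x : E)
    (hmin : ∀ y, f x + ε / 2 * ‖x‖ ^ 2 ≤ f y + ε / 2 * ‖y‖ ^ 2) (y : E) :
    f x + ε / 2 * ‖x‖ ^ 2 + ε / 2 * ‖y - x‖ ^ 2 ≤ f y + ε / 2 * ‖y‖ ^ 2 := by
  have h1 : ∀ t : ℝ, t ∈ Set.Ioo (0:ℝ) 1 →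
      f x + ε / 2 * ‖x‖ ^ 2 + ε / 2 * (1 - t) * ‖y - x‖ ^ 2 ≤ f y + ε / 2 * ‖y‖ ^ 2 := by
    intro t ht
    obtain ⟨ht0, ht1⟩ := ht
    have hconvf := hconv.2 (Set.mem_univ x) (Set.mem_univ y)
      (by linarith : (0:ℝ) ≤ 1 - t) ht0.le (by ring)
    have hnorm : ‖(1 - t) • x + t • y‖ ^ 2
        = (1 - t) * ‖x‖ ^ 2 + t * ‖y‖ ^ 2 - t * (1 - t) * ‖y - x‖ ^ 2 := by
      have e1 : ⟪(1 - t) • x + t • y, (1 - t) • x + t • y⟫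
          = (1-t)*(1-t)*⟪x,x⟫ + (1-t)*t*⟪x,y⟫ + t*(1-t)*⟪y,x⟫ + t*t*⟪y,y⟫ := by
        rw [inner_add_add_self]
        simp [inner_add_add_self, real_inner_smul_left, real_inner_smul_right,
          real_inner_comm x y, norm_smul, mul_pow, Real.norm_eq_abs, sq_abs]
        try ring
      have e2 : ⟪y - x, y - x⟫ = ⟪y,y⟫ - ⟪y,x⟫ - ⟪x,y⟫ + ⟪x,x⟫ := by
        rw [inner_sub_sub_self]; try ring
      have n1 := real_inner_self_eq_norm_sq ((1 - t) • x + t • y)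
      have n2 := real_inner_self_eq_norm_sq (y - x)
      have n3 := real_inner_self_eq_norm_sq x
      have n4 := real_inner_self_eq_norm_sq y
      have hc := real_inner_comm x y
      nlinarith [e1, e2, n1, n2, n3, n4, hc]
    have hm := hmin ((1 - t) • x + t • y)
    rw [hnorm] at hm
    simp only [smul_eq_mul] at hconvf
    nlinarith [hm, hconvf, ht0, ht1, mul_pos ht0 hε, sq_nonneg ‖y - x‖]
  have hev : ∀ᶠ t in 𝓝[>] (0:ℝ),
      f x + ε / 2 * ‖x‖ ^ 2 + ε / 2 * (1 - t) * ‖y - x‖ ^ 2 ≤ f y + ε / 2 * ‖y‖ ^ 2 := by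
    filter_upwards [Ioo_mem_nhdsGT_of_mem (by constructor <;> norm_num : (0:ℝ) ∈ Set.Ico (0:ℝ) 1)] with t ht
    exact h1 t ht
  have hbase : Tendsto (fun t : ℝ => (1:ℝ) - t) (𝓝 (0:ℝ)) (𝓝 (1:ℝ)) := by
    exact (continuous_const.sub continuous_id).tendsto' (0:ℝ) (1:ℝ) (by simp)
  have htend : Tendsto (fun t : ℝ => f x + ε / 2 * ‖x‖ ^ 2 + ε / 2 * (1 - t) * ‖y - x‖ ^ 2)
      (𝓝[>] (0:ℝ)) (𝓝 (f x + ε / 2 * ‖x‖ ^ 2 + ε / 2 * 1 * ‖y - x‖ ^ 2)) :=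
    (((hbase.const_mul (ε / 2)).mul_const (‖y - x‖ ^ 2)).const_add
      (f x + ε / 2 * ‖x‖ ^ 2)).mono_left nhdsWithin_le_nhds
  have := le_of_tendsto htend hev
  simpa using this

theorem stmt18
{E : Type*} [NormedAddCommGroup E] [InnerProductSpace ℝ E]
    (f : E → ℝ) (hconv : ConvexOn ℝ Set.univ f) (hlsc : LowerSemicontinuous f)
    (ε : ℕ → ℝ) (hεpos : ∀ k, 1 ≤ k → 0 < ε k) (hεmono : ∀ k, 1 ≤ k → ε (k + 1) ≤ ε k)
    (hεlim : Tendsto ε atTop (𝓝 0))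
    (xb : ℕ → E)
    (hxb : ∀ k, 1 ≤ k → ∀ y : E,
      f (xb k) + ε k / 2 * ‖xb k‖ ^ 2 ≤ f y + ε k / 2 * ‖y‖ ^ 2) :
    (∀ k : ℕ, 1 ≤ k → ε (k + 1) < ε k →
      (‖xb (k + 1)‖ ^ 2 - ‖xb k‖ ^ 2 ≥
        (ε k + ε (k + 1)) / (ε k - ε (k + 1)) * ‖xb (k + 1) - xb k‖ ^ 2) ∧
      (‖xb k‖ ^ 2 + ε (k + 1) / (ε k - ε (k + 1)) * ‖xb (k + 1) - xb k‖ ^ 2 ≤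
        ⟪xb (k + 1), xb k⟫) ∧
      (⟪xb (k + 1), xb k⟫ ≤
        ‖xb (k + 1)‖ ^ 2 - ε k / (ε k - ε (k + 1)) * ‖xb (k + 1) - xb k‖ ^ 2)) ∧
    (∀ k : ℕ, 1 ≤ k →
      ‖xb (k + 1) - xb k‖ ≤
        min ((ε k - ε (k + 1)) / ε (k + 1) * ‖xb k‖)
          ((ε k - ε (k + 1)) / ε k * ‖xb (k + 1)‖)) := by
  -- main key inequality
  have key : ∀ k : ℕ, 1 ≤ k →
      (ε k + ε (k + 1)) * ‖xb (k + 1) - xb k‖ ^ 2 ≤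
        (ε k - ε (k + 1)) * (‖xb (k + 1)‖ ^ 2 - ‖xb k‖ ^ 2) := by
    intro k hk
    have hk1 : 1 ≤ k + 1 := by omega
    have h1 := strong_min_aux f hconv (ε k) (hεpos k hk) (xb k) (hxb k hk) (xb (k + 1))
    have h2 := strong_min_aux f hconv (ε (k + 1)) (hεpos (k + 1) hk1) (xb (k + 1))
      (hxb (k + 1) hk1) (xb k)
    rw [norm_sub_rev] at h2
    nlinarith [h1, h2]
  have hip : ∀ k : ℕ, ⟪xb (k + 1), xb k⟫
      = (‖xb (k + 1)‖ ^ 2 + ‖xb k‖ ^ 2 - ‖xb (k + 1) - xb k‖ ^ 2) / 2 := by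
    intro k
    have := @norm_sub_sq_real E _ _ (xb (k + 1)) (xb k)
    linarith
  constructor
  · intro k hk hlt
    have hΔ : 0 < ε k - ε (k + 1) := by linarith
    have hkey := key k hk
    refine ⟨?_, ?_, ?_⟩
    · rw [ge_iff_le, div_mul_eq_mul_div, div_le_iff₀ hΔ]
      nlinarith [hkey]
    · rw [hip k, div_mul_eq_mul_div]
      rw [← sub_nonneg]
      have h : ((‖xb (k + 1)‖ ^ 2 + ‖xb k‖ ^ 2 - ‖xb (k + 1) - xb k‖ ^ 2) / 2
          - (‖xb k‖ ^ 2 + ε (k + 1) * ‖xb (k + 1) - xb k‖ ^ 2 / (ε k - ε (k + 1))))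
          = ((ε k - ε (k+1)) * (‖xb (k+1)‖^2 - ‖xb k‖^2)
             - (ε k + ε (k+1)) * ‖xb (k + 1) - xb k‖ ^ 2) / (2 * (ε k - ε (k+1))) := by
        field_simp
        ring
      rw [h]
      exact div_nonneg (by linarith) (by linarith)
    · rw [hip k, div_mul_eq_mul_div, ← sub_nonneg]
      have h : (‖xb (k + 1)‖ ^ 2 - ε k * ‖xb (k + 1) - xb k‖ ^ 2 / (ε k - ε (k + 1))
          - (‖xb (k + 1)‖ ^ 2 + ‖xb k‖ ^ 2 - ‖xb (k + 1) - xb k‖ ^ 2) / 2)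
          = ((ε k - ε (k+1)) * (‖xb (k+1)‖^2 - ‖xb k‖^2)
             - (ε k + ε (k+1)) * ‖xb (k + 1) - xb k‖ ^ 2) / (2 * (ε k - ε (k+1))) := by
        field_simp
        ring
      rw [h]
      exact div_nonneg (by linarith) (by linarith)
  · intro k hk
    have hk1 : 1 ≤ k + 1 := by omega
    have hεk := hεpos k hk
    have hεk1 := hεpos (k + 1) hk1
    have hΔ : 0 ≤ ε k - ε (k + 1) := by linarith [hεmono k hk]
    have hkey := key k hk
    have hipk := hip k
    set d := ‖xb (k + 1) - xb k‖ with hd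
    have hd0 : 0 ≤ d := norm_nonneg _
    have hcs1 : ⟪xb (k + 1), xb (k + 1) - xb k⟫ ≤ ‖xb (k + 1)‖ * d :=
      real_inner_le_norm _ _
    have hcs2 : ⟪xb (k + 1) - xb k, xb k⟫ ≤ d * ‖xb k‖ :=
      real_inner_le_norm _ _
    have he1 : ⟪xb (k + 1), xb (k + 1) - xb k⟫
        = ‖xb (k + 1)‖ ^ 2 - ⟪xb (k + 1), xb k⟫ := by
      rw [inner_sub_right, real_inner_self_eq_norm_sq]
    have he2 : ⟪xb (k + 1) - xb k, xb k⟫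
        = ⟪xb (k + 1), xb k⟫ - ‖xb k‖ ^ 2 := by
      rw [inner_sub_left, real_inner_self_eq_norm_sq, real_inner_comm]
    -- ε k * d^2 ≤ Δ * ⟪x_{k+1}, d⟫ and ε (k+1) * d^2 ≤ Δ * ⟪d, x_k⟫
    have hb1 : ε k * d ^ 2 ≤ (ε k - ε (k + 1)) * (‖xb (k + 1)‖ * d) := by
      nlinarith [hkey, hipk, hcs1, he1, mul_le_mul_of_nonneg_left hcs1 hΔ]
    have hb2 : ε (k + 1) * d ^ 2 ≤ (ε k - ε (k + 1)) * (d * ‖xb k‖) := by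
      nlinarith [hkey, hipk, hcs2, he2, mul_le_mul_of_nonneg_left hcs2 hΔ]
    apply le_min
    · rcases eq_or_lt_of_le hd0 with h0 | h0
      · rw [← h0]; positivity
      · rw [div_mul_eq_mul_div, le_div_iff₀ hεk1]
        nlinarith [hb2, h0]
    · rcases eq_or_lt_of_le hd0 with h0 | h0
      · rw [← h0]; positivity
      · rw [div_mul_eq_mul_div, le_div_iff₀ hεk]
        nlinarith [hb1, h0]
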